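/- Let n be an even positive integer and λ > 0 a real number. There exists a nontrivial triple (f₁, f₂, f₃) of eigenfunctions on the star graph with edge lengths π/n, π/n, π (as defined in the context) if and only if either √λ = n·(k + 1/2) for some k ∈ ℕ, or cos(√λ·π/n)·sin(√λ·π) + 2·sin(√λ·π/n)·cos(√λ·π) = 0. -/

import Mathlib

open Real

/-- A triple of eigenfunctions on the star graph with edge lengths `π/n`, `π/n`, `π`:
`C²` functions solving `f'' = -λ f` on their respective edges, continuous at the
central vertex, with the Kirchhoff condition at the central vertex and Neumann
(standard) conditions at the boundary vertices. -/
def IsStarTripleEigenSystem (n : ℕ) (lam : ℝ) (f₁ f₂ f₃ : ℝ → ℝ) : Prop :=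
  ContDiff ℝ 2 f₁ ∧ ContDiff ℝ 2 f₂ ∧ ContDiff ℝ 2 f₃ ∧
  (∀ x ∈ Set.Icc (0 : ℝ) (Real.pi / n), deriv (deriv f₁) x = -lam * f₁ x) ∧
  (∀ x ∈ Set.Icc (0 : ℝ) (Real.pi / n), deriv (deriv f₂) x = -lam * f₂ x) ∧
  (∀ x ∈ Set.Icc (0 : ℝ) Real.pi, deriv (deriv f₃) x = -lam * f₃ x) ∧
  f₁ 0 = f₂ 0 ∧ f₂ 0 = f₃ 0 ∧
  deriv f₁ 0 + deriv f₂ 0 + deriv f₃ 0 = 0 ∧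
  deriv f₁ (Real.pi / n) = 0 ∧ deriv f₂ (Real.pi / n) = 0 ∧ deriv f₃ Real.pi = 0

/-- The triple is nontrivial if some component does not vanish identically on its edge. -/
def StarTripleNontrivial (n : ℕ) (f₁ f₂ f₃ : ℝ → ℝ) : Prop :=
  (∃ x ∈ Set.Icc (0 : ℝ) (Real.pi / n), f₁ x ≠ 0) ∨
  (∃ x ∈ Set.Icc (0 : ℝ) (Real.pi / n), f₂ x ≠ 0) ∨
  (∃ x ∈ Set.Icc (0 : ℝ) Real.pi, f₃ x ≠ 0)

/- ## Auxiliary lemmas -/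

lemma trig_hasDerivAt (A B μ x : ℝ) :
    HasDerivAt (fun y => A * Real.cos (μ*y) + B * Real.sin (μ*y))
      (μ * (-A * Real.sin (μ*x) + B * Real.cos (μ*x))) x := by
  have hμ : HasDerivAt (fun y : ℝ => μ * y) μ x := by
    simpa using (hasDerivAt_id x).const_mul μ
  have hc := ((Real.hasDerivAt_cos (μ*x)).comp x hμ).const_mul A
  have hs := ((Real.hasDerivAt_sin (μ*x)).comp x hμ).const_mul B
  convert hc.add hs using 1
  · rfl
  · rfl
  · rfl
  · ring

lemma trig_contDiff (A B μ : ℝ) :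
    ContDiff ℝ 2 (fun y => A * Real.cos (μ*y) + B * Real.sin (μ*y)) := by
  have h : ContDiff ℝ 2 (fun y : ℝ => μ * y) := contDiff_const.mul contDiff_id
  exact (contDiff_const.mul ((Real.contDiff_cos.of_le le_top).comp h)).add
    (contDiff_const.mul ((Real.contDiff_sin.of_le le_top).comp h))

lemma trig_deriv_eq (A B μ : ℝ) :
    deriv (fun y => A * Real.cos (μ*y) + B * Real.sin (μ*y))
      = fun x => (μ*B) * Real.cos (μ*x) + (-(μ*A)) * Real.sin (μ*x) := by
  funext x
  rw [(trig_hasDerivAt A B μ x).deriv]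
  ring

lemma trig_deriv2 (A B μ x : ℝ) :
    deriv (deriv (fun y => A * Real.cos (μ*y) + B * Real.sin (μ*y))) x
      = -(μ^2) * (A * Real.cos (μ*x) + B * Real.sin (μ*x)) := by
  rw [trig_deriv_eq]
  rw [(trig_hasDerivAt (μ*B) (-(μ*A)) μ x).deriv]
  ring

lemma ode_rep {μ L : ℝ} (hμ : 0 < μ) {f : ℝ → ℝ} (hf : ContDiff ℝ 2 f)
    (hode : ∀ x ∈ Set.Icc (0:ℝ) L, deriv (deriv f) x = -(μ^2) * f x) :
    ∀ x ∈ Set.Icc (0:ℝ) L,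
      f x = f 0 * Real.cos (μ*x) + (deriv f 0 / μ) * Real.sin (μ*x) ∧
      deriv f x = μ * (-(f 0) * Real.sin (μ*x) + (deriv f 0 / μ) * Real.cos (μ*x)) := by
  have hμ0 : μ ≠ 0 := hμ.ne'
  have hfd : Differentiable ℝ f := hf.differentiable (by norm_num)
  have hf1 : ContDiff ℝ 1 (deriv f) := by
    have h2 : ContDiff ℝ (1+1) f := by exact_mod_cast hf
    exact (contDiff_succ_iff_deriv.mp h2).2.2
  have hfd' : Differentiable ℝ (deriv f) := hf1.differentiable one_ne_zero
  have hmul : ∀ x : ℝ, HasDerivAt (fun y : ℝ => μ * y) μ x := fun x => by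
    simpa using (hasDerivAt_id x).const_mul μ
  have hcos : ∀ x : ℝ, HasDerivAt (fun y => Real.cos (μ*y)) (-Real.sin (μ*x) * μ) x :=
    fun x => (Real.hasDerivAt_cos (μ*x)).comp x (hmul x)
  have hsin : ∀ x : ℝ, HasDerivAt (fun y => Real.sin (μ*y)) (Real.cos (μ*x) * μ) x :=
    fun x => (Real.hasDerivAt_sin (μ*x)).comp x (hmul x)
  set F : ℝ → ℝ := fun y => f y * Real.cos (μ*y) - deriv f y * Real.sin (μ*y) / μ with hF
  set G : ℝ → ℝ := fun y => f y * Real.sin (μ*y) + deriv f y * Real.cos (μ*y) / μ with hG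
  have hFd : ∀ x : ℝ, HasDerivAt F
      (deriv f x * Real.cos (μ*x) + f x * (-Real.sin (μ*x) * μ)
        - (deriv (deriv f) x * Real.sin (μ*x) + deriv f x * (Real.cos (μ*x) * μ)) / μ) x :=
    fun x => (((hfd x).hasDerivAt.mul (hcos x)).sub
      (((hfd' x).hasDerivAt.mul (hsin x)).div_const μ))
  have hGd : ∀ x : ℝ, HasDerivAt G
      (deriv f x * Real.sin (μ*x) + f x * (Real.cos (μ*x) * μ)
        + (deriv (deriv f) x * Real.cos (μ*x) + deriv f x * (-Real.sin (μ*x) * μ)) / μ) x :=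
    fun x => (((hfd x).hasDerivAt.mul (hsin x)).add
      (((hfd' x).hasDerivAt.mul (hcos x)).div_const μ))
  have hFc : ∀ x ∈ Set.Icc (0:ℝ) L, F x = F 0 := by
    apply constant_of_has_deriv_right_zero
    · exact (Differentiable.continuous (fun x => (hFd x).differentiableAt)).continuousOn
    · intro x hx
      have h0 := hFd x
      rw [hode x ⟨hx.1, hx.2.le⟩] at h0
      have : deriv f x * Real.cos (μ*x) + f x * (-Real.sin (μ*x) * μ)
          - ((-(μ^2) * f x) * Real.sin (μ*x) + deriv f x * (Real.cos (μ*x) * μ)) / μ = 0 := by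
        field_simp
        ring
      rw [this] at h0
      exact h0.hasDerivWithinAt
  have hGc : ∀ x ∈ Set.Icc (0:ℝ) L, G x = G 0 := by
    apply constant_of_has_deriv_right_zero
    · exact (Differentiable.continuous (fun x => (hGd x).differentiableAt)).continuousOn
    · intro x hx
      have h0 := hGd x
      rw [hode x ⟨hx.1, hx.2.le⟩] at h0
      have : deriv f x * Real.sin (μ*x) + f x * (Real.cos (μ*x) * μ)
          + ((-(μ^2) * f x) * Real.cos (μ*x) + deriv f x * (-Real.sin (μ*x) * μ)) / μ = 0 := by
        field_simp
        ring
      rw [this] at h0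
      exact h0.hasDerivWithinAt
  intro x hx
  have hFx := hFc x hx
  have hGx := hGc x hx
  have hpy := Real.sin_sq_add_cos_sq (μ*x)
  simp only [hF, hG, mul_zero, Real.cos_zero, Real.sin_zero, mul_one, zero_div, sub_zero,
    add_zero, zero_add, mul_zero] at hFx hGx
  constructor
  · have h1 : (f x * Real.cos (μ*x) - deriv f x * Real.sin (μ*x) / μ) * Real.cos (μ*x)
        + (f x * Real.sin (μ*x) + deriv f x * Real.cos (μ*x) / μ) * Real.sin (μ*x) = f x := by
      field_simp
      linear_combination (f x * μ) * hpy
    rw [← h1, hFx, hGx]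
  · have h2 : μ * (-(f x * Real.cos (μ*x) - deriv f x * Real.sin (μ*x) / μ) * Real.sin (μ*x)
        + (f x * Real.sin (μ*x) + deriv f x * Real.cos (μ*x) / μ) * Real.cos (μ*x)) = deriv f x := by
      field_simp
      linear_combination (deriv f x) * hpy
    rw [← h2, hFx, hGx]

set_option maxHeartbeats 2000000 in
/-- Secular characterization of the eigenvalues of the standard Laplacian on the star
graph with edge lengths `π/n`, `π/n`, `π` for even `n`: a nontrivial eigenfunction triple
for `λ > 0` exists iff `√λ = n (k + 1/2)` for some `k ∈ ℕ`, or
`cos(√λ π/n) sin(√λ π) + 2 sin(√λ π/n) cos(√λ π) = 0`. -/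
theorem star_triple_eigenvalue_characterization (n : ℕ) (hn : 0 < n) (hne : Even n)
    (lam : ℝ) (hlam : 0 < lam) :
    (∃ f₁ f₂ f₃ : ℝ → ℝ, IsStarTripleEigenSystem n lam f₁ f₂ f₃ ∧
        StarTripleNontrivial n f₁ f₂ f₃)
      ↔ ((∃ k : ℕ, Real.sqrt lam = n * ((k : ℝ) + 1 / 2)) ∨
          Real.cos (Real.sqrt lam * (Real.pi / n)) * Real.sin (Real.sqrt lam * Real.pi)
            + 2 * Real.sin (Real.sqrt lam * (Real.pi / n))
              * Real.cos (Real.sqrt lam * Real.pi) = 0) := by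
  set μ := Real.sqrt lam with hμdef
  have hμ : 0 < μ := Real.sqrt_pos.mpr hlam
  have hμ0 : μ ≠ 0 := hμ.ne'
  have hμ2 : μ^2 = lam := Real.sq_sqrt hlam.le
  have hn0 : (n:ℝ) ≠ 0 := Nat.cast_ne_zero.mpr hn.ne'
  have hπn : (0:ℝ) ≤ Real.pi / n := by positivity
  have hπ : (0:ℝ) ≤ Real.pi := Real.pi_pos.le
  constructor
  · rintro ⟨f₁, f₂, f₃, ⟨hc1, hc2, hc3, ho1, ho2, ho3, h12, h23, hK, hN1, hN2, hN3⟩, hnt⟩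
    by_cases hC : Real.cos (μ * (Real.pi / n)) = 0
    · -- cosine vanishes at the short edge endpoint: first alternative
      left
      obtain ⟨k, hk⟩ := Real.cos_eq_zero_iff.mp hC
      have hkpos : (0:ℝ) < (2*(k:ℝ)+1) := by
        have h1 : 0 < μ * (Real.pi / n) := by positivity
        rw [hk] at h1
        nlinarith [Real.pi_pos]
      have hk0 : 0 ≤ k := by
        have h' : (-1:ℤ) < k := by exact_mod_cast (show (-1:ℝ) < (k:ℝ) by linarith)
        omega
      refine ⟨k.toNat, ?_⟩
      have hkc : ((k.toNat : ℕ) : ℝ) = (k:ℝ) := by exact_mod_cast Int.toNat_of_nonneg hk0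
      rw [hkc]
      have h2 : μ * Real.pi * 2 = (2*(k:ℝ)+1) * Real.pi * (n:ℝ) := by
        field_simp at hk
        linear_combination Real.pi * hk
      have h3 : (μ - (n:ℝ)*((k:ℝ)+1/2)) * (Real.pi * 2) = 0 := by ring_nf; nlinarith [h2]
      rcases mul_eq_zero.mp h3 with h | h
      · linarith
      · nlinarith [Real.pi_pos]
    · -- cosine nonzero: derive the secular equation
      right
      have hrep1 := ode_rep hμ hc1 (fun x hx => by rw [hμ2]; exact ho1 x hx)
      have hrep2 := ode_rep hμ hc2 (fun x hx => by rw [hμ2]; exact ho2 x hx)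
      have hrep3 := ode_rep hμ hc3 (fun x hx => by rw [hμ2]; exact ho3 x hx)
      have ha2 : f₂ 0 = f₁ 0 := h12.symm
      have ha3 : f₃ 0 = f₁ 0 := by rw [← h23, ha2]
      have hmem1 : Real.pi / n ∈ Set.Icc (0:ℝ) (Real.pi / n) := ⟨hπn, le_refl _⟩
      have hmem3 : Real.pi ∈ Set.Icc (0:ℝ) Real.pi := ⟨hπ, le_refl _⟩
      have h1a := (hrep1 _ hmem1).2
      have h2a := (hrep2 _ hmem1).2
      have h3a := (hrep3 _ hmem3).2
      rw [hN1] at h1a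
      rw [hN2, ha2] at h2a
      rw [hN3, ha3] at h3a
      set a := f₁ 0 with hadef
      set B₁ := deriv f₁ 0 with hB1def
      set B₂ := deriv f₂ 0 with hB2def
      set B₃ := deriv f₃ 0 with hB3def
      set s := Real.sin (μ * (Real.pi / n)) with hsdef
      set C := Real.cos (μ * (Real.pi / n)) with hCdef
      set S := Real.sin (μ * Real.pi) with hSdef
      set c3 := Real.cos (μ * Real.pi) with hc3def
      have e1 : -a * μ * s + B₁ * C = 0 := by
        field_simp at h1a
        linarith [h1a]
      have e2 : -a * μ * s + B₂ * C = 0 := by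
        field_simp at h2a
        linarith [h2a]
      have e3 : -a * μ * S + B₃ * c3 = 0 := by
        field_simp at h3a
        linarith [h3a]
      -- nontriviality forces a ≠ 0
      have hA : a ≠ 0 := by
        intro ha0
        have hb1 : B₁ = 0 := by
          rcases mul_eq_zero.mp (show B₁ * C = 0 by rw [ha0] at e1; linarith [e1]) with hzz | hzz
          · exact hzz
          · exact absurd hzz hC
        have hb2 : B₂ = 0 := by
          rcases mul_eq_zero.mp (show B₂ * C = 0 by rw [ha0] at e2; linarith [e2]) with hzz | hzz
          · exact hzz
          · exact absurd hzz hC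
        have hb3 : B₃ = 0 := by linarith [hK]
        rcases hnt with ⟨x, hx, hfx⟩ | ⟨x, hx, hfx⟩ | ⟨x, hx, hfx⟩
        · have hrx := (hrep1 x hx).1
          rw [ha0, hb1] at hrx
          simp at hrx
          exact hfx hrx
        · have hrx := (hrep2 x hx).1
          rw [ha2, ha0, hb2] at hrx
          simp at hrx
          exact hfx hrx
        · have hrx := (hrep3 x hx).1
          rw [ha3, ha0, hb3] at hrx
          simp at hrx
          exact hfx hrx
      -- derive the secular equation
      have key : a * μ * (C * S + 2 * s * c3) = 0 := by
        linear_combination (-C) * e3 - c3 * e1 - c3 * e2 + (C * c3) * hK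
      rcases mul_eq_zero.mp key with hz | hz
      · rcases mul_eq_zero.mp hz with hz' | hz'
        · exact absurd hz' hA
        · exact absurd hz' hμ0
      · exact hz
  · intro h
    have hC0 : Real.cos (μ * (Real.pi / n)) = 0 ∨
        (Real.cos (μ * (Real.pi / n)) * Real.sin (μ * Real.pi)
            + 2 * Real.sin (μ * (Real.pi / n)) * Real.cos (μ * Real.pi) = 0) := by
      rcases h with ⟨k, hk⟩ | hsec
      · left
        have harg : μ * (Real.pi / n) = (k:ℝ) * Real.pi + Real.pi / 2 := by
          rw [hk]; field_simp
        rw [harg, Real.cos_add]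
        simp [Real.sin_nat_mul_pi, Real.cos_pi_div_two, Real.sin_pi_div_two]
      · exact Or.inr hsec
    by_cases hC : Real.cos (μ * (Real.pi / n)) = 0
    · -- construction: f₁ = sin(μx), f₂ = -sin(μx), f₃ = 0
      refine ⟨fun y => (0:ℝ) * Real.cos (μ*y) + 1 * Real.sin (μ*y),
              fun y => (0:ℝ) * Real.cos (μ*y) + (-1) * Real.sin (μ*y),
              fun y => (0:ℝ) * Real.cos (μ*y) + 0 * Real.sin (μ*y), ?_, ?_⟩
      · refine ⟨trig_contDiff _ _ _, trig_contDiff _ _ _, trig_contDiff _ _ _,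
          ?_, ?_, ?_, ?_, ?_, ?_, ?_, ?_, ?_⟩
        · intro x hx; rw [trig_deriv2, hμ2]
        · intro x hx; rw [trig_deriv2, hμ2]
        · intro x hx; rw [trig_deriv2, hμ2]
        · simp
        · simp
        · simp only [trig_deriv_eq]; simp
        · rw [trig_deriv_eq]; simp [hC]
        · rw [trig_deriv_eq]; simp [hC]
        · rw [trig_deriv_eq]; simp
      · left
        refine ⟨Real.pi / n, ⟨hπn, le_refl _⟩, ?_⟩
        simp only [zero_mul, one_mul, zero_add]
        intro hsin
        have hpy := Real.sin_sq_add_cos_sq (μ * (Real.pi / n))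
        rw [hsin, hC] at hpy
        norm_num at hpy
    · -- construction with a = cos (μ π / n) ≠ 0
      have hsec : Real.cos (μ * (Real.pi / n)) * Real.sin (μ * Real.pi)
          + 2 * Real.sin (μ * (Real.pi / n)) * Real.cos (μ * Real.pi) = 0 :=
        hC0.resolve_left hC
      refine ⟨fun y => Real.cos (μ * (Real.pi / n)) * Real.cos (μ*y)
                + Real.sin (μ * (Real.pi / n)) * Real.sin (μ*y),
              fun y => Real.cos (μ * (Real.pi / n)) * Real.cos (μ*y)
                + Real.sin (μ * (Real.pi / n)) * Real.sin (μ*y),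
              fun y => Real.cos (μ * (Real.pi / n)) * Real.cos (μ*y)
                + (-(2 * Real.sin (μ * (Real.pi / n)))) * Real.sin (μ*y), ?_, ?_⟩
      · refine ⟨trig_contDiff _ _ _, trig_contDiff _ _ _, trig_contDiff _ _ _,
          ?_, ?_, ?_, ?_, ?_, ?_, ?_, ?_, ?_⟩
        · intro x hx; rw [trig_deriv2, hμ2]
        · intro x hx; rw [trig_deriv2, hμ2]
        · intro x hx; rw [trig_deriv2, hμ2]
        · simp
        · simp
        · simp only [trig_deriv_eq]; simp; ring
        · rw [trig_deriv_eq]; simp; ring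
        · rw [trig_deriv_eq]; simp; ring
        · rw [trig_deriv_eq]
          simp only
          linear_combination (-μ) * hsec
      · left
        refine ⟨0, ⟨le_refl _, hπn⟩, ?_⟩
        simpa using hC
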